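/- Let λ be a cardinal with uncountable cofinality, and let o : N → Ord be an injection of the Baire space N = ℕ^ℕ into the ordinals (the position function of a well order ≺ on N). Then the intersection over all τ with o(τ) < λ of the Baire-space closures cl{ ξ : o(τ) < o(ξ) < λ } is nonempty. -/

import Mathlib

open Set

theorem stmt18 (lam : Ordinal)
    (hcof : Cardinal.aleph0 < lam.cof)
    (o : (ℕ → ℕ) → Ordinal) (ho : Function.Injective o)
    (hrange : ∀ β : Ordinal, β < lam → ∃ ξ : ℕ → ℕ, o ξ = β) :
    (⋂ τ ∈ {τ : ℕ → ℕ | o τ < lam},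
      closure {ξ : ℕ → ℕ | o τ < o ξ ∧ o ξ < lam}).Nonempty := by
  have hlim : Order.IsSuccLimit lam := Ordinal.aleph0_le_cof.1 hcof.le
  by_contra h
  rw [Set.not_nonempty_iff_eq_empty] at h
  set S := {τ : ℕ → ℕ | o τ < lam} with hS
  have hempty : (univ ∩ ⋂ τ : S,
      closure {ξ : ℕ → ℕ | o (τ : ℕ → ℕ) < o ξ ∧ o ξ < lam}) = ∅ := by
    rw [univ_inter, iInter_subtype]
    exact h
  obtain ⟨u, hu, hue⟩ := isLindelof_univ.elim_countable_subfamily_closed _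
    (fun _ => isClosed_closure) hempty
  haveI : Countable u := hu.to_subtype
  have hsup : (⨆ i : u, o (i : ℕ → ℕ) + 1) < lam := by
    apply Ordinal.iSup_lt_ord_lift (lt_of_le_of_lt (le_of_le_of_eq (Cardinal.lift_le.2 Cardinal.mk_le_aleph0) Cardinal.lift_aleph0) hcof)
    intro i
    rw [Ordinal.add_one_eq_succ]
    exact hlim.succ_lt i.1.2
  obtain ⟨ξ, hξ⟩ := hrange _ hsup
  have hmem : ξ ∈ ⋂ i : S, ⋂ _ : i ∈ u,
      closure {ξ : ℕ → ℕ | o (i : ℕ → ℕ) < o ξ ∧ o ξ < lam} := by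
    refine mem_iInter.2 fun i => mem_iInter.2 fun hi => subset_closure ?_
    refine ⟨?_, hξ ▸ hsup⟩
    rw [hξ]
    calc o (i : ℕ → ℕ) < o (i : ℕ → ℕ) + 1 := (Ordinal.add_one_eq_succ _).symm ▸ Order.lt_succ _
      _ ≤ _ := Ordinal.le_iSup (fun j : u => o (j : ℕ → ℕ) + 1) ⟨i, hi⟩
  exact absurd hue (by rw [univ_inter]; exact fun h' => (h' ▸ hmem : ξ ∈ (∅ : Set (ℕ → ℕ))))
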